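/- Let θ(t) = t² − (5/3)t⁴ and ψ(x,y) = 1/4 + x/h_x + (θ(2x/h_x) − θ(2y/h_y))/(4θ(1)) on K̂ = (−h_x/2, h_x/2) × (−h_y/2, h_y/2). Then ∫_{K̂} |∇ψ|² dx dy = (37/28)(h_x/h_y) + (65/28)(h_y/h_x). -/

import Mathlib

open intervalIntegral

/-- Key 1-D integral: `∫_{-h/2}^{h/2} (c (a - 3t/h² + 40t³/h⁴)² + d) dt`. -/
lemma dssy_key (h a c d : ℝ) (hh : 0 < h) :
    (∫ t in (-(h / 2))..(h / 2), (c * (a - 3 * t / h ^ 2 + 40 * t ^ 3 / h ^ 4) ^ 2 + d)) =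
      c * (a ^ 2 * h + 37 / (28 * h)) + d * h := by
  have hne : h ≠ 0 := ne_of_gt hh
  have hF : ∀ t : ℝ, HasDerivAt
      (fun t : ℝ => (c * a ^ 2 + d) * t ^ 1 + (-3 * c * a / h ^ 2) * t ^ 2 +
        (c * 3 / h ^ 4) * t ^ 3 + (c * 20 * a / h ^ 4) * t ^ 4 +
        (-48 * c / h ^ 6) * t ^ 5 + (c * 1600 / (7 * h ^ 8)) * t ^ 7)
      (c * (a - 3 * t / h ^ 2 + 40 * t ^ 3 / h ^ 4) ^ 2 + d) t := by
    intro t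
    have H := (((((((hasDerivAt_pow 1 t).const_mul (c * a ^ 2 + d)).add
      ((hasDerivAt_pow 2 t).const_mul (-3 * c * a / h ^ 2))).add
      ((hasDerivAt_pow 3 t).const_mul (c * 3 / h ^ 4))).add
      ((hasDerivAt_pow 4 t).const_mul (c * 20 * a / h ^ 4))).add
      ((hasDerivAt_pow 5 t).const_mul (-48 * c / h ^ 6))).add
      ((hasDerivAt_pow 7 t).const_mul (c * 1600 / (7 * h ^ 8))))
    convert H using 1
    · rfl
    · rfl
    · rfl
    push_cast
    field_simp
    ring
  rw [intervalIntegral.integral_eq_sub_of_hasDerivAt (fun t _ => hF t)]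
  · field_simp
    ring
  · apply Continuous.intervalIntegrable
    fun_prop

/-- `∫_{K̂} |∇ψ|² = (37/28)(h_x/h_y) + (65/28)(h_y/h_x)` for the DSSY
basis function `ψ` associated with the right vertical edge, whose gradient is
`(1/h_x + θ'(2x/h_x)/(2h_x θ(1)), −θ'(2y/h_y)/(2h_y θ(1)))`. -/
theorem dssy_diagonal_stiffness (hx hy : ℝ) (hhx : 0 < hx) (hhy : 0 < hy)
    (θ θd : ℝ → ℝ) (hθ : ∀ t, θ t = t ^ 2 - 5 / 3 * t ^ 4)
    (hθd : ∀ t, HasDerivAt θ (θd t) t) :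
    (∫ x in (-(hx / 2))..(hx / 2), ∫ y in (-(hy / 2))..(hy / 2),
        ((1 / hx + θd (2 * x / hx) / (2 * hx * θ 1)) ^ 2 +
         (-(θd (2 * y / hy) / (2 * hy * θ 1))) ^ 2)) =
      37 / 28 * (hx / hy) + 65 / 28 * (hy / hx) := by
  have hxne : hx ≠ 0 := ne_of_gt hhx
  have hyne : hy ≠ 0 := ne_of_gt hhy
  have hθ1 : θ 1 = -(2 / 3) := by rw [hθ]; norm_num
  have hθeq : θ = fun t => t ^ 2 - 5 / 3 * t ^ 4 := funext hθ
  have hθd' : ∀ t, θd t = 2 * t - 20 / 3 * t ^ 3 := by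
    intro t
    refine (hθd t).unique ?_
    rw [hθeq]
    have H := (hasDerivAt_pow 2 t).sub ((hasDerivAt_pow 4 t).const_mul (5 / 3 : ℝ))
    convert H using 1
    · rfl
    push_cast
    ring
  have e1 : ∀ x y : ℝ,
      ((1 / hx + θd (2 * x / hx) / (2 * hx * θ 1)) ^ 2 +
        (-(θd (2 * y / hy) / (2 * hy * θ 1))) ^ 2) =
      (1 : ℝ) * (0 - 3 * y / hy ^ 2 + 40 * y ^ 3 / hy ^ 4) ^ 2 +
        (1 / hx + θd (2 * x / hx) / (2 * hx * θ 1)) ^ 2 := by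
    intro x y
    simp only [hθd', hθ1]
    field_simp
    ring
  have inner : ∀ x : ℝ,
      (∫ y in (-(hy / 2))..(hy / 2),
        ((1 / hx + θd (2 * x / hx) / (2 * hx * θ 1)) ^ 2 +
         (-(θd (2 * y / hy) / (2 * hy * θ 1))) ^ 2)) =
      (1 : ℝ) * ((0 : ℝ) ^ 2 * hy + 37 / (28 * hy)) +
        (1 / hx + θd (2 * x / hx) / (2 * hx * θ 1)) ^ 2 * hy := by
    intro x
    rw [show (fun y => ((1 / hx + θd (2 * x / hx) / (2 * hx * θ 1)) ^ 2 +
         (-(θd (2 * y / hy) / (2 * hy * θ 1))) ^ 2)) = fun y =>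
        ((1 : ℝ) * (0 - 3 * y / hy ^ 2 + 40 * y ^ 3 / hy ^ 4) ^ 2 +
          (1 / hx + θd (2 * x / hx) / (2 * hx * θ 1)) ^ 2) from funext fun y => e1 x y]
    exact dssy_key hy 0 1 _ hhy
  simp_rw [inner]
  have e2 : ∀ x : ℝ,
      (1 : ℝ) * ((0 : ℝ) ^ 2 * hy + 37 / (28 * hy)) +
        (1 / hx + θd (2 * x / hx) / (2 * hx * θ 1)) ^ 2 * hy =
      hy * (1 / hx - 3 * x / hx ^ 2 + 40 * x ^ 3 / hx ^ 4) ^ 2 + 37 / (28 * hy) := by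
    intro x
    simp only [hθd', hθ1]
    field_simp
    ring
  simp_rw [e2]
  rw [dssy_key hx (1 / hx) hy (37 / (28 * hy)) hhx]
  field_simp
  ring
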